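/- Let G_{2n+1} be as above, generated by a and b. Then the kernel of the homomorphism f : G_{2n+1} → D_{2(2n+1)} obtained by taking absolute values of matrix entries equals the set of diagonal sign matrices with determinant 1, i.e. diagonal matrices diag(ε₁,…,ε_{2n+1}) with ε_i = ±1 and ∏ε_i = 1; moreover f is surjective, sending a to a reflection and b to a rotation. -/

import Mathlib

/-- The signed permutation matrix `a = (1, 2n+1, 2n, …, n+2, −(n+1), …, −3, −2)`
(column `j` is `ε_j e_{σ(j)}`), written with 0-based indices. -/
def Amat (n : ℕ) : Matrix (Fin (2*n+1)) (Fin (2*n+1)) ℤ := fun i j =>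
  if (j : ℕ) = 0 then (if (i : ℕ) = 0 then 1 else 0)
  else if (i : ℕ) = 2*n+1 - (j : ℕ) then (if (j : ℕ) ≤ n then 1 else -1) else 0

/-- The cyclic permutation matrix `b = (2n+1, 1, 2, …, 2n)`, with 0-based indices:
column `j` is `e_{j-1 (mod 2n+1)}`. -/
def Bmat (n : ℕ) : Matrix (Fin (2*n+1)) (Fin (2*n+1)) ℤ := fun i j =>
  if i = j - 1 then 1 else 0

namespace AbsHomAux

open DihedralGroup Matrix

variable {N : ℕ}

def phiFun : DihedralGroup N → Equiv.Perm (ZMod N)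
  | .r k => Equiv.subRight k
  | .sr k => Equiv.subLeft k

def phi (N : ℕ) : DihedralGroup N →* Equiv.Perm (ZMod N) where
  toFun := phiFun
  map_one' := by
    ext x
    show phiFun (r 0) x = x
    simp [phiFun]
  map_mul' := by
    rintro (i | i) (j | j) <;>
      simp only [r_mul_r, r_mul_sr, sr_mul_r, sr_mul_sr] <;> ext x <;>
      simp [phiFun, Equiv.Perm.mul_apply] <;> ring

lemma natCast_inj' [NeZero N] {p q : ℕ} (hp : p < N) (hq : q < N) :
    (p : ZMod N) = (q : ZMod N) ↔ p = q := by
  constructor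
  · intro h
    have := congrArg ZMod.val h
    rwa [ZMod.val_cast_of_lt hp, ZMod.val_cast_of_lt hq] at this
  · rintro rfl; rfl

lemma castSurj [NeZero N] (x : ZMod N) : ∃ i : Fin N, ((i : ℕ) : ZMod N) = x :=
  ⟨⟨x.val, x.val_lt⟩, ZMod.natCast_rightInverse x⟩

lemma phi_inj (h3 : 3 ≤ N) : Function.Injective (phi N) := by
  have : NeZero N := ⟨by omega⟩
  have h2 : (2 : ZMod N) ≠ 0 := by
    intro h
    have h' : ((2 : ℕ) : ZMod N) = ((0 : ℕ) : ZMod N) := by push_cast; exact h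
    have := (natCast_inj' (show 2 < N by omega) (show 0 < N by omega)).1 h'
    omega
  rintro (i | i) (j | j) h <;>
    have hx : ∀ x : ZMod N, phi N _ x = phi N _ x := fun x => congrFun (congrArg _ h) x
  · have h0 := hx 0
    simp [phi, phiFun] at h0
    rw [h0]
  · exfalso
    have h0 := hx 0
    have h1 := hx 1
    simp only [phi, phiFun, MonoidHom.coe_mk, OneHom.coe_mk, Equiv.subRight_apply,
      Equiv.subLeft_apply] at h0 h1
    apply h2
    linear_combination h1 - h0
  · exfalso
    have h0 := hx 0
    have h1 := hx 1
    simp only [phi, phiFun, MonoidHom.coe_mk, OneHom.coe_mk, Equiv.subRight_apply,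
      Equiv.subLeft_apply] at h0 h1
    apply h2
    linear_combination h0 - h1
  · have h0 := hx 0
    simp [phi, phiFun] at h0
    rw [h0]

def P (g : Matrix (Fin N) (Fin N) ℤ) (d : DihedralGroup N) : Prop :=
  ∀ i j : Fin N,
    (((i : ℕ) : ZMod N) = phi N d ((j : ℕ) : ZMod N) → g i j = 1 ∨ g i j = -1) ∧
    (((i : ℕ) : ZMod N) ≠ phi N d ((j : ℕ) : ZMod N) → g i j = 0)

lemma P_unique [NeZero N] (h3 : 3 ≤ N) {g : Matrix (Fin N) (Fin N) ℤ}
    {d e : DihedralGroup N} (hd : P g d) (he : P g e) : d = e := by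
  apply phi_inj h3
  ext x
  obtain ⟨j, hj⟩ := castSurj (N := N) x
  obtain ⟨i, hi⟩ := castSurj (phi N d x)
  have h1 : g i j = 1 ∨ g i j = -1 := (hd i j).1 (by rw [hi, hj])
  have h2 : ((i : ℕ) : ZMod N) = phi N e ((j : ℕ) : ZMod N) := by
    by_contra hne
    have := (he i j).2 hne
    rcases h1 with h | h <;> omega
  subst hj
  rw [← hi, h2]

lemma P_one [NeZero N] : P (1 : Matrix (Fin N) (Fin N) ℤ) 1 := by
  intro i j
  simp only [_root_.map_one, Equiv.Perm.coe_one, id_eq]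
  constructor
  · intro h
    have := (natCast_inj' i.isLt j.isLt).1 h
    left
    rw [Fin.ext_iff.2 this, Matrix.one_apply_eq]
  · intro h
    rw [Matrix.one_apply_ne]
    intro hc
    exact h (by rw [hc])

lemma P_mul [NeZero N] {g h : Matrix (Fin N) (Fin N) ℤ} {d e : DihedralGroup N}
    (hg : P g d) (hh : P h e) : P (g * h) (d * e) := by
  intro i j
  obtain ⟨κ, hκ⟩ := castSurj (phi N e ((j : ℕ) : ZMod N))
  have hsum : (g * h) i j = g i κ * h κ j := by
    rw [Matrix.mul_apply]
    apply Finset.sum_eq_single_of_mem κ (Finset.mem_univ _)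
    intro k _ hk
    have : ((k : ℕ) : ZMod N) ≠ phi N e ((j : ℕ) : ZMod N) := by
      rw [← hκ]
      intro hc
      exact hk (Fin.ext ((natCast_inj' k.isLt κ.isLt).1 hc))
    rw [(hh k j).2 this, mul_zero]
  have hphi : phi N (d * e) ((j : ℕ) : ZMod N) = phi N d ((κ : ℕ) : ZMod N) := by
    rw [_root_.map_mul, Equiv.Perm.mul_apply, hκ]
  constructor
  · intro hcond
    rw [hphi] at hcond
    have h1 := (hg i κ).1 hcond
    have h2 := (hh κ j).1 hκ
    rw [hsum]
    rcases h1 with h1 | h1 <;> rcases h2 with h2 | h2 <;> rw [h1, h2] <;> norm_num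
  · intro hcond
    rw [hphi] at hcond
    rw [hsum, (hg i κ).2 hcond, zero_mul]

lemma P_transpose [NeZero N] {g : Matrix (Fin N) (Fin N) ℤ} {d : DihedralGroup N}
    (hg : P g d) : P gᵀ d⁻¹ := by
  intro i j
  have key : (((i : ℕ) : ZMod N) = phi N d⁻¹ ((j : ℕ) : ZMod N)) ↔
      (((j : ℕ) : ZMod N) = phi N d ((i : ℕ) : ZMod N)) := by
    rw [_root_.map_inv, Equiv.Perm.eq_inv_iff_eq, eq_comm]
  constructor
  · intro h
    rw [Matrix.transpose_apply]
    exact (hg j i).1 (key.1 h)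
  · intro h
    rw [Matrix.transpose_apply]
    exact (hg j i).2 fun hc => h (key.2 hc)

lemma transpose_mul_self [NeZero N] {g : Matrix (Fin N) (Fin N) ℤ} {d : DihedralGroup N}
    (hg : P g d) : gᵀ * g = 1 := by
  ext i j
  rw [Matrix.mul_apply]
  by_cases hij : i = j
  · subst hij
    rw [Matrix.one_apply_eq]
    obtain ⟨κ, hκ⟩ := castSurj (phi N d ((i : ℕ) : ZMod N))
    rw [Finset.sum_eq_single_of_mem κ (Finset.mem_univ _)]
    · rw [Matrix.transpose_apply]
      rcases (hg κ i).1 hκ with h | h <;> rw [h] <;> norm_num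
    · intro k _ hk
      have : ((k : ℕ) : ZMod N) ≠ phi N d ((i : ℕ) : ZMod N) := by
        rw [← hκ]
        intro hc
        exact hk (Fin.ext ((natCast_inj' k.isLt κ.isLt).1 hc))
      rw [Matrix.transpose_apply, (hg k i).2 this, zero_mul]
  · rw [Matrix.one_apply_ne hij]
    apply Finset.sum_eq_zero
    intro k _
    rw [Matrix.transpose_apply]
    by_cases hki : ((k : ℕ) : ZMod N) = phi N d ((i : ℕ) : ZMod N)
    · have hkj : ((k : ℕ) : ZMod N) ≠ phi N d ((j : ℕ) : ZMod N) := by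
        rw [hki]
        intro hc
        have := (phi N d).injective hc
        exact hij (Fin.ext ((natCast_inj' i.isLt j.isLt).1 this))
      rw [(hg k j).2 hkj, mul_zero]
    · rw [(hg k i).2 hki, zero_mul]

def H (N : ℕ) [NeZero N] : Subgroup (SpecialLinearGroup (Fin N) ℤ) where
  carrier := {g | ∃ d, P (g : Matrix (Fin N) (Fin N) ℤ) d}
  one_mem' := ⟨1, by exact P_one⟩
  mul_mem' := fun ⟨d, hd⟩ ⟨e, he⟩ => ⟨d * e, by exact P_mul hd he⟩
  inv_mem' := by
    rintro g ⟨d, hd⟩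
    refine ⟨d⁻¹, ?_⟩
    let gt : SpecialLinearGroup (Fin N) ℤ :=
      ⟨(g : Matrix (Fin N) (Fin N) ℤ)ᵀ, by rw [Matrix.det_transpose]; exact g.2⟩
    have hgt : gt * g = 1 := by
      apply Subtype.ext
      change (g : Matrix (Fin N) (Fin N) ℤ)ᵀ * (g : Matrix (Fin N) (Fin N) ℤ) = 1
      exact transpose_mul_self hd
    have hco : (↑(g⁻¹) : Matrix (Fin N) (Fin N) ℤ) = (g : Matrix (Fin N) (Fin N) ℤ)ᵀ := by
      rw [inv_eq_of_mul_eq_one_left hgt]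
    rw [hco]
    exact P_transpose hd

open scoped Classical in
noncomputable def F [NeZero N] (g : SpecialLinearGroup (Fin N) ℤ) : DihedralGroup N :=
  if h : ∃ d, P (g : Matrix (Fin N) (Fin N) ℤ) d then h.choose else 1

lemma F_eq [NeZero N] (h3 : 3 ≤ N) {g : SpecialLinearGroup (Fin N) ℤ} {d : DihedralGroup N}
    (hd : P (g : Matrix (Fin N) (Fin N) ℤ) d) : F g = d := by
  rw [F, dif_pos ⟨d, hd⟩]
  exact P_unique h3 (Exists.choose_spec (⟨d, hd⟩ : ∃ e, P (g : Matrix (Fin N) (Fin N) ℤ) e)) hd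

lemma P_Amat (n : ℕ) (hn : 0 < n) : P (Amat n) (DihedralGroup.sr (0 : ZMod (2*n+1))) := by
  have : NeZero (2*n+1) := ⟨by omega⟩
  intro i j
  have hphi : phi (2*n+1) (DihedralGroup.sr 0) ((j : ℕ) : ZMod (2*n+1)) =
      -(((j : ℕ) : ZMod (2*n+1))) := by
    simp [phi, phiFun]
  rw [hphi]
  have hiLt := i.isLt
  have hjLt := j.isLt
  by_cases hj0 : (j : ℕ) = 0
  · rw [hj0]
    simp only [Nat.cast_zero, neg_zero]
    have hch : (((i : ℕ) : ZMod (2*n+1)) = 0) ↔ (i : ℕ) = 0 := by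
      rw [show (0 : ZMod (2*n+1)) = ((0 : ℕ) : ZMod (2*n+1)) by simp]
      exact natCast_inj' hiLt (by omega)
    constructor
    · intro h
      simp [Amat, hj0, hch.1 h]
    · intro h
      simp [Amat, hj0, hch.not.1 h]
  · have hkey : -(((j : ℕ) : ZMod (2*n+1))) = (((2*n+1 - (j : ℕ)) : ℕ) : ZMod (2*n+1)) := by
      rw [Nat.cast_sub (le_of_lt hjLt), ZMod.natCast_self, zero_sub]
    rw [hkey]
    have hch := natCast_inj' (N := 2*n+1) hiLt (show 2*n+1 - (j : ℕ) < 2*n+1 by omega)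
    constructor
    · intro h
      have hi := hch.1 h
      by_cases hjn : (j : ℕ) ≤ n <;> simp [Amat, hj0, hi, hjn]
    · intro h
      have hi : (i : ℕ) ≠ 2*n+1 - (j : ℕ) := fun hc => h (hch.2 hc)
      simp [Amat, hj0, hi]

lemma P_Bmat (n : ℕ) (hn : 0 < n) : P (Bmat n) (DihedralGroup.r (1 : ZMod (2*n+1))) := by
  have : NeZero (2*n+1) := ⟨by omega⟩
  intro i j
  have hphi : phi (2*n+1) (DihedralGroup.r 1) ((j : ℕ) : ZMod (2*n+1)) =
      ((j : ℕ) : ZMod (2*n+1)) - 1 := by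
    simp [phi, phiFun]
  rw [hphi]
  have hmodlt : ((i : ℕ) + 1) % (2*n+1) < 2*n+1 := Nat.mod_lt _ (by omega)
  have hiff : (((i : ℕ) : ZMod (2*n+1)) = ((j : ℕ) : ZMod (2*n+1)) - 1) ↔ i = j - 1 := by
    rw [eq_sub_iff_add_eq, eq_sub_iff_add_eq]
    have hz : (((i : ℕ) : ZMod (2*n+1)) + 1 = ((j : ℕ) : ZMod (2*n+1))) ↔
        ((i : ℕ) + 1) % (2*n+1) = (j : ℕ) := by
      rw [show ((i : ℕ) : ZMod (2*n+1)) + 1 =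
          ((((i : ℕ) + 1) % (2*n+1) : ℕ) : ZMod (2*n+1)) by
        rw [ZMod.natCast_mod]; push_cast; ring]
      exact natCast_inj' hmodlt j.isLt
    have hf : (i + 1 = j) ↔ ((i : ℕ) + 1) % (2*n+1) = (j : ℕ) := by
      rw [Fin.ext_iff, Fin.val_add, Fin.val_one', Nat.mod_eq_of_lt (show 1 < 2*n+1 by omega)]
    rw [hz, hf]
  constructor
  · intro h
    left
    simp [Bmat, hiff.1 h]
  · intro h
    simp [Bmat, hiff.not.1 h]

end AbsHomAux

open AbsHomAux

set_option maxHeartbeats 1000000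

/-- The entry-wise absolute value homomorphism `f : G_{2n+1} → D_{2(2n+1)}` (identified
with the abstract dihedral group, sending `a` to the reflection `x = sr 0` and `b` to the
rotation `y = r 1`) is surjective and its kernel is exactly the set of diagonal sign
matrices `diag(ε₁,…,ε_{2n+1})` with `ε_i = ±1` and `∏ ε_i = 1`. -/
theorem abs_hom_kernel (n : ℕ) (hn : 0 < n)
    (a b : Matrix.SpecialLinearGroup (Fin (2*n+1)) ℤ)
    (ha : (a : Matrix (Fin (2*n+1)) (Fin (2*n+1)) ℤ) = Amat n)
    (hb : (b : Matrix (Fin (2*n+1)) (Fin (2*n+1)) ℤ) = Bmat n) :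
    ∃ f : ↥(Subgroup.closure {a, b}) →* DihedralGroup (2*n+1),
      Function.Surjective f ∧
      f ⟨a, Subgroup.subset_closure (Set.mem_insert _ _)⟩ = DihedralGroup.sr 0 ∧
      f ⟨b, Subgroup.subset_closure (Set.mem_insert_of_mem _ rfl)⟩ = DihedralGroup.r 1 ∧
      ∀ g : ↥(Subgroup.closure {a, b}),
        f g = 1 ↔
          ((∀ i j : Fin (2*n+1), i ≠ j →
              ((g : Matrix.SpecialLinearGroup (Fin (2*n+1)) ℤ) :
                Matrix (Fin (2*n+1)) (Fin (2*n+1)) ℤ) i j = 0) ∧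
            (∀ i : Fin (2*n+1),
              ((g : Matrix.SpecialLinearGroup (Fin (2*n+1)) ℤ) :
                Matrix (Fin (2*n+1)) (Fin (2*n+1)) ℤ) i i = 1 ∨
              ((g : Matrix.SpecialLinearGroup (Fin (2*n+1)) ℤ) :
                Matrix (Fin (2*n+1)) (Fin (2*n+1)) ℤ) i i = -1) ∧
            (∏ i : Fin (2*n+1),
              ((g : Matrix.SpecialLinearGroup (Fin (2*n+1)) ℤ) :
                Matrix (Fin (2*n+1)) (Fin (2*n+1)) ℤ) i i) = 1) := by
  have : NeZero (2*n+1) := ⟨by omega⟩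
  have h3 : 3 ≤ 2*n+1 := by omega
  have hPa : P ((a : Matrix (Fin (2*n+1)) (Fin (2*n+1)) ℤ)) (DihedralGroup.sr 0) := by
    rw [ha]; exact P_Amat n hn
  have hPb : P ((b : Matrix (Fin (2*n+1)) (Fin (2*n+1)) ℤ)) (DihedralGroup.r 1) := by
    rw [hb]; exact P_Bmat n hn
  have hsub : Subgroup.closure {a, b} ≤ H (2*n+1) := by
    rw [Subgroup.closure_le]
    rintro g (rfl | rfl)
    · exact ⟨DihedralGroup.sr 0, hPa⟩
    · exact ⟨DihedralGroup.r 1, hPb⟩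
  have hFa : F a = DihedralGroup.sr 0 := F_eq h3 hPa
  have hFb : F b = DihedralGroup.r 1 := F_eq h3 hPb
  refine ⟨{ toFun := fun g => F ((g : ↥(Subgroup.closure {a, b})) :
              Matrix.SpecialLinearGroup (Fin (2*n+1)) ℤ)
            map_one' := ?_
            map_mul' := ?_ }, ?_, ?_, ?_, ?_⟩
  · show F ((1 : ↥(Subgroup.closure {a, b})) : Matrix.SpecialLinearGroup (Fin (2*n+1)) ℤ) = 1
    apply F_eq h3
    rw [show ((1 : ↥(Subgroup.closure {a, b})) : Matrix.SpecialLinearGroup (Fin (2*n+1)) ℤ)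
      = 1 from rfl, Matrix.SpecialLinearGroup.coe_one]
    exact P_one
  · intro g h
    obtain ⟨d, hd⟩ := hsub g.2
    obtain ⟨e, he⟩ := hsub h.2
    show F (((g * h : ↥(Subgroup.closure {a, b})) :
        Matrix.SpecialLinearGroup (Fin (2*n+1)) ℤ)) = F ↑g * F ↑h
    rw [F_eq h3 hd, F_eq h3 he]
    apply F_eq h3
    rw [show ((g * h : ↥(Subgroup.closure {a, b})) :
        Matrix.SpecialLinearGroup (Fin (2*n+1)) ℤ) = ↑g * ↑h from rfl,
      Matrix.SpecialLinearGroup.coe_mul]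
    exact P_mul hd he
  · rintro (k | k)
    · refine ⟨(⟨b, Subgroup.subset_closure (Set.mem_insert_of_mem _ rfl)⟩ :
        ↥(Subgroup.closure {a, b})) ^ (ZMod.val k), ?_⟩
      rw [map_pow]
      show (F b) ^ (ZMod.val k) = _
      rw [hFb, DihedralGroup.r_one_pow, ZMod.natCast_rightInverse k]
    · refine ⟨(⟨a, Subgroup.subset_closure (Set.mem_insert _ _)⟩ :
        ↥(Subgroup.closure {a, b})) * ((⟨b, Subgroup.subset_closure
          (Set.mem_insert_of_mem _ rfl)⟩ : ↥(Subgroup.closure {a, b})) ^ (ZMod.val k)), ?_⟩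
      rw [map_mul, map_pow]
      show (F a) * (F b) ^ (ZMod.val k) = _
      rw [hFa, hFb, DihedralGroup.r_one_pow, DihedralGroup.sr_mul_r, zero_add,
        ZMod.natCast_rightInverse k]
  · exact hFa
  · exact hFb
  · intro g
    obtain ⟨d, hd⟩ := hsub g.2
    constructor
    · intro hfg
      have hF : F ((g : ↥(Subgroup.closure {a, b})) :
          Matrix.SpecialLinearGroup (Fin (2*n+1)) ℤ) = 1 := hfg
      have hd1 : P (((g : ↥(Subgroup.closure {a, b})) : Matrix.SpecialLinearGroup (Fin (2*n+1)) ℤ) :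
          Matrix (Fin (2*n+1)) (Fin (2*n+1)) ℤ) 1 := by
        have hde : d = 1 := by rw [← F_eq h3 hd, hF]
        rwa [hde] at hd
      have hoff : ∀ i j : Fin (2*n+1), i ≠ j →
          ((g : Matrix.SpecialLinearGroup (Fin (2*n+1)) ℤ) :
            Matrix (Fin (2*n+1)) (Fin (2*n+1)) ℤ) i j = 0 := by
        intro i j hij
        apply (hd1 i j).2
        simp only [_root_.map_one, Equiv.Perm.coe_one, id_eq]
        intro hc
        exact hij (Fin.ext ((natCast_inj' i.isLt j.isLt).1 hc))
      refine ⟨hoff, fun i => (hd1 i i).1 (by simp only [_root_.map_one,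
        Equiv.Perm.coe_one, id_eq]), ?_⟩
      have hdm : ((g : Matrix.SpecialLinearGroup (Fin (2*n+1)) ℤ) :
          Matrix (Fin (2*n+1)) (Fin (2*n+1)) ℤ) =
          Matrix.diagonal (fun i => ((g : Matrix.SpecialLinearGroup (Fin (2*n+1)) ℤ) :
            Matrix (Fin (2*n+1)) (Fin (2*n+1)) ℤ) i i) := by
        ext i j
        by_cases hij : i = j
        · subst hij; rw [Matrix.diagonal_apply_eq]
        · rw [Matrix.diagonal_apply_ne _ hij]; exact hoff i j hij
      have hdet := ((g : ↥(Subgroup.closure {a, b})) :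
        Matrix.SpecialLinearGroup (Fin (2*n+1)) ℤ).2
      rw [hdm, Matrix.det_diagonal] at hdet
      exact hdet
    · rintro ⟨hoff, hdiag, -⟩
      have hd1 : P (((g : ↥(Subgroup.closure {a, b})) : Matrix.SpecialLinearGroup (Fin (2*n+1)) ℤ) :
          Matrix (Fin (2*n+1)) (Fin (2*n+1)) ℤ) 1 := by
        intro i j
        simp only [_root_.map_one, Equiv.Perm.coe_one, id_eq]
        constructor
        · intro h
          have hij : i = j := Fin.ext ((natCast_inj' i.isLt j.isLt).1 h)
          subst hij
          exact hdiag i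
        · intro h
          exact hoff i j fun hc => h (by rw [hc])
      exact F_eq h3 hd1
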